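/- For all x, z ∈ (0,1), t > 0, μ > 0 and b ∈ ℝ, the Neumann heat kernel on (0,1), given by G̃_b(t,x,z) = (e^{bt}/√(4πμt)) Σ_{n∈ℤ} [exp(−(x−2n+z)²/(4μt)) + exp(−(x−2n−z)²/(4μt))], satisfies G̃_b(t,x,z) ≥ exp(bt − (x+z)²/(4μt)) · [1/√(4πμt) + (1/(4√3)) erfc(√(3/(μt)))]. -/

import Mathlib

open MeasureTheory Real

/-- The complementary error function `erfc(y) = (2/√π) ∫_y^∞ e^{−s²} ds`. -/
noncomputable def erfc (y : ℝ) : ℝ :=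
  (2 / Real.sqrt π) * ∫ s in Set.Ioi y, Real.exp (-s ^ 2)

lemma summable_gauss_nat (bb : ℝ) (hb : 0 < bb) :
    Summable fun k : ℕ => Real.exp (-bb * (1 + (k : ℝ)) ^ 2) := by
  have hbd : Summable fun k : ℕ => Real.exp (-bb) * Real.exp (-bb) ^ k :=
    (summable_geometric_of_lt_one (Real.exp_pos _).le
      (Real.exp_lt_one_iff.2 (by linarith))).mul_left _
  refine Summable.of_nonneg_of_le (fun k => (Real.exp_pos _).le) (fun k => ?_) hbd
  have h1 : Real.exp (-bb) * Real.exp (-bb) ^ k = Real.exp (-bb + (k : ℝ) * (-bb)) := by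
    rw [← Real.exp_nat_mul, ← Real.exp_add]
  rw [h1]
  apply Real.exp_le_exp.2
  have hk : (0:ℝ) ≤ (k : ℝ) := Nat.cast_nonneg k
  nlinarith [mul_nonneg (mul_nonneg hb.le hk) hk]

lemma integral_le_tsum_gauss (bb : ℝ) (hb : 0 < bb) :
    (∫ u in Set.Ioi (1 : ℝ), Real.exp (-bb * u ^ 2)) ≤
      ∑' k : ℕ, Real.exp (-bb * (1 + (k : ℝ)) ^ 2) := by
  have hsum := summable_gauss_nat bb hb
  have hint : IntegrableOn (fun u : ℝ => Real.exp (-bb * u ^ 2)) (Set.Ioi 1) :=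
    (integrable_exp_neg_mul_sq hb).integrableOn
  have h1 : ∀ N : ℕ, (∫ u in (1 : ℝ)..(1 + N), Real.exp (-bb * u ^ 2)) ≤
      ∑ i ∈ Finset.range N, Real.exp (-bb * (1 + (i : ℝ)) ^ 2) := by
    intro N
    refine AntitoneOn.integral_le_sum (f := fun u => Real.exp (-bb * u ^ 2)) ?_
    intro u hu v hv huv
    apply Real.exp_le_exp.2
    have h0 : (0:ℝ) ≤ v + u := by
      have := hu.1; have := hv.1; linarith
    nlinarith [mul_nonneg (mul_nonneg hb.le (sub_nonneg.2 huv)) h0]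
  have t1 : Filter.Tendsto (fun N : ℕ => ∫ u in (1 : ℝ)..(1 + N), Real.exp (-bb * u ^ 2))
      Filter.atTop (nhds (∫ u in Set.Ioi (1 : ℝ), Real.exp (-bb * u ^ 2))) := by
    apply MeasureTheory.intervalIntegral_tendsto_integral_Ioi _ hint
    exact Filter.tendsto_atTop_add_const_left _ _ tendsto_natCast_atTop_atTop
  have t2 : Filter.Tendsto (fun N : ℕ => ∑ i ∈ Finset.range N, Real.exp (-bb * (1 + (i : ℝ)) ^ 2))
      Filter.atTop (nhds (∑' k : ℕ, Real.exp (-bb * (1 + (k : ℝ)) ^ 2))) :=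
    hsum.hasSum.tendsto_sum_nat
  exact le_of_tendsto_of_tendsto' t1 t2 h1

lemma summable_gauss_int (c r : ℝ) (hc : 0 < c) (hr : |r| ≤ 2) :
    Summable fun n : ℤ => Real.exp (-(r - 2 * (n : ℝ)) ^ 2 / c) := by
  have key : ∀ s : ℝ, |s| ≤ 2 → Summable fun k : ℕ => Real.exp (-(s - 2 * (k : ℝ)) ^ 2 / c) := by
    intro s hs
    have hbd : Summable fun k : ℕ => Real.exp (8 / c) * Real.exp (-4 / c) ^ k := by
      refine ((summable_geometric_of_lt_one (Real.exp_pos _).le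
        (Real.exp_lt_one_iff.2 ?_)).mul_left _)
      exact div_neg_of_neg_of_pos (by norm_num) hc
    refine Summable.of_nonneg_of_le (fun k => (Real.exp_pos _).le) (fun k => ?_) hbd
    have h1 : Real.exp (8 / c) * Real.exp (-4 / c) ^ k =
        Real.exp ((8 - 4 * (k : ℝ)) / c) := by
      rw [← Real.exp_nat_mul, ← Real.exp_add]
      congr 1
      field_simp
      ring
    rw [h1]
    apply Real.exp_le_exp.2
    have key2 : -(s - 2 * (k : ℝ)) ^ 2 ≤ 8 - 4 * (k : ℝ) := by
      obtain ⟨hs1, hs2⟩ := abs_le.1 hs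
      have hk : (0:ℝ) ≤ (k : ℝ) := Nat.cast_nonneg k
      rcases le_or_gt ((k : ℝ)) 2 with h | h
      · nlinarith [sq_nonneg (s - 2 * (k : ℝ))]
      · have hk1 : (0:ℝ) ≤ (k : ℝ) - 1 := by linarith
        have hk2 : (0:ℝ) ≤ (k : ℝ) - 2 := by linarith
        nlinarith [mul_nonneg hk1 hk2, mul_nonneg hk (sub_nonneg.2 hs2)]
    rw [div_le_div_iff₀ hc hc]
    exact mul_le_mul_of_nonneg_right key2 hc.le
  apply Summable.of_nat_of_neg
  · exact (key r hr).congr fun k => by norm_num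
  · refine (key (-r) (by rwa [abs_neg])).congr fun k => ?_
    congr 1
    push_cast
    ring

/-- Lemma 6 of the paper: lower bound for the Neumann heat kernel on `(0,1)` given by
the method of images. -/
theorem stmt_11 (μ b t x z : ℝ) (hμ : 0 < μ) (ht : 0 < t)
    (hx : x ∈ Set.Ioo (0:ℝ) 1) (hz : z ∈ Set.Ioo (0:ℝ) 1) :
    Real.exp (b * t - (x + z) ^ 2 / (4 * μ * t)) *
        (1 / Real.sqrt (4 * π * μ * t) + (1 / (4 * Real.sqrt 3)) *
          erfc (Real.sqrt (3 / (μ * t)))) ≤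
      (Real.exp (b * t) / Real.sqrt (4 * π * μ * t)) *
        ∑' n : ℤ, (Real.exp (-(x - 2 * (n : ℝ) + z) ^ 2 / (4 * μ * t)) +
          Real.exp (-(x - 2 * (n : ℝ) - z) ^ 2 / (4 * μ * t))) := by
  obtain ⟨hx0, hx1⟩ := hx
  obtain ⟨hz0, hz1⟩ := hz
  have hμt : 0 < μ * t := mul_pos hμ ht
  set c : ℝ := 4 * μ * t with hc_def
  have hc : 0 < c := by positivity
  set aa : ℝ := 3 / (μ * t) with haa_def
  have haa : 0 < aa := by positivity
  set a : ℝ := Real.sqrt aa with ha_def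
  have ha : 0 < a := Real.sqrt_pos.2 haa
  have ha2 : a ^ 2 = aa := Real.sq_sqrt haa.le
  set A : ℤ → ℝ := fun n => Real.exp (-(x - 2 * (n : ℝ) + z) ^ 2 / c) with hA_def
  set B : ℤ → ℝ := fun n => Real.exp (-(x - 2 * (n : ℝ) - z) ^ 2 / c) with hB_def
  -- summability
  have sA : Summable A := by
    refine (summable_gauss_int c (x + z) hc
      (by rw [abs_le]; constructor <;> linarith)).congr fun n => ?_
    simp only [hA_def]
    congr 1
    ring
  have sB : Summable B := by
    refine (summable_gauss_int c (x - z) hc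
      (by rw [abs_le]; constructor <;> linarith)).congr fun n => ?_
    simp only [hB_def]
    congr 1
    ring
  have sG : Summable fun n : ℤ => A n + B n := sA.add sB
  have sAN : Summable fun k : ℕ => A k := sA.comp_injective Nat.cast_injective
  -- Step 1 : restrict the sum to ℕ
  have h1 : (∑' k : ℕ, A k) ≤ ∑' n : ℤ, (A n + B n) := by
    refine Summable.tsum_le_tsum_of_inj (fun k : ℕ => (k : ℤ)) Nat.cast_injective
      (fun n _ => by simp only [hA_def, hB_def]; positivity) (fun k => ?_) sAN sG
    have : 0 < B k := Real.exp_pos _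
    linarith
  -- Step 2 : split off the 0 term
  have h2 : (∑' k : ℕ, A k) = A 0 + ∑' k : ℕ, A ((k : ℤ) + 1) := by
    rw [Summable.tsum_eq_zero_add sAN]
    push_cast
    ring_nf
  have hA0 : A 0 = Real.exp (-((x + z) ^ 2 / c)) := by
    simp only [hA_def]
    norm_num [neg_div]
  -- Step 3 : lower bound the tail terms
  have h3 : ∀ k : ℕ, Real.exp (-((x + z) ^ 2 / c)) * Real.exp (-aa * (1 + (k : ℝ)) ^ 2) ≤
      A ((k : ℤ) + 1) := by
    intro k
    rw [← Real.exp_add]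
    simp only [hA_def]
    apply Real.exp_le_exp.2
    push_cast
    have heq : -((x + z) ^ 2 / c) + -aa * (1 + (k : ℝ)) ^ 2 =
        -((x + z) ^ 2 + 12 * (1 + (k : ℝ)) ^ 2) / c := by
      rw [haa_def, hc_def]
      field_simp
      ring
    rw [heq, div_le_div_iff₀ hc hc]
    have key : -((x + z) ^ 2 + 12 * (1 + (k : ℝ)) ^ 2) ≤ -(x - 2 * ((k : ℝ) + 1) + z) ^ 2 := by
      have hk : (0:ℝ) ≤ (k : ℝ) := Nat.cast_nonneg k
      nlinarith [sq_nonneg (1 + (k : ℝ)), mul_nonneg (by linarith : (0:ℝ) ≤ 1 + (k:ℝ))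
        (by linarith : (0:ℝ) ≤ x + z)]
    exact mul_le_mul_of_nonneg_right key hc.le
  have sTail : Summable fun k : ℕ => A ((k : ℤ) + 1) := by
    refine ((summable_nat_add_iff 1).2 sAN).congr fun k => ?_
    push_cast
    ring_nf
  have sLow : Summable fun k : ℕ =>
      Real.exp (-((x + z) ^ 2 / c)) * Real.exp (-aa * (1 + (k : ℝ)) ^ 2) :=
    (summable_gauss_nat aa haa).mul_left _
  have h4 : Real.exp (-((x + z) ^ 2 / c)) * ∑' k : ℕ, Real.exp (-aa * (1 + (k : ℝ)) ^ 2) ≤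
      ∑' k : ℕ, A ((k : ℤ) + 1) := by
    rw [← tsum_mul_left]
    exact Summable.tsum_le_tsum h3 sLow sTail
  -- Step 4 : integral comparison and substitution
  have h5 : (∫ u in Set.Ioi (1 : ℝ), Real.exp (-aa * u ^ 2)) ≤
      ∑' k : ℕ, Real.exp (-aa * (1 + (k : ℝ)) ^ 2) := integral_le_tsum_gauss aa haa
  have h6 : (∫ u in Set.Ioi (1 : ℝ), Real.exp (-aa * u ^ 2)) =
      a⁻¹ * (Real.sqrt π / 2 * erfc a) := by
    have hsub : (∫ u in Set.Ioi (1 : ℝ), Real.exp (-aa * u ^ 2)) =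
        a⁻¹ * ∫ s in Set.Ioi a, Real.exp (-s ^ 2) := by
      have h := MeasureTheory.integral_comp_mul_left_Ioi (fun s => Real.exp (-s ^ 2)) 1 ha
      simp only [mul_one, smul_eq_mul] at h
      rw [← h]
      refine setIntegral_congr_fun measurableSet_Ioi fun u _ => ?_
      rw [← ha2]
      congr 1
      ring
    rw [hsub]
    congr 1
    rw [erfc]
    have hπ : Real.sqrt π ≠ 0 := by
      have := Real.pi_pos
      positivity
    field_simp
  -- Combine into a lower bound for the tsum
  have hT : Real.exp (-((x + z) ^ 2 / c)) * (1 + a⁻¹ * (Real.sqrt π / 2 * erfc a)) ≤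
      ∑' n : ℤ, (A n + B n) := by
    have e1 : Real.exp (-((x + z) ^ 2 / c)) * (1 + a⁻¹ * (Real.sqrt π / 2 * erfc a)) =
        Real.exp (-((x + z) ^ 2 / c)) +
          Real.exp (-((x + z) ^ 2 / c)) * (a⁻¹ * (Real.sqrt π / 2 * erfc a)) := by ring
    rw [e1]
    calc Real.exp (-((x + z) ^ 2 / c)) +
          Real.exp (-((x + z) ^ 2 / c)) * (a⁻¹ * (Real.sqrt π / 2 * erfc a))
        ≤ Real.exp (-((x + z) ^ 2 / c)) +
          Real.exp (-((x + z) ^ 2 / c)) * ∑' k : ℕ, Real.exp (-aa * (1 + (k : ℝ)) ^ 2) := by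
          refine add_le_add_right (mul_le_mul_of_nonneg_left ?_ (Real.exp_pos _).le) _
          rw [← h6]; exact h5
      _ ≤ A 0 + ∑' k : ℕ, A ((k : ℤ) + 1) := by
          rw [hA0]; exact add_le_add_right h4 _
      _ = ∑' k : ℕ, A k := h2.symm
      _ ≤ ∑' n : ℤ, (A n + B n) := h1
  -- coefficient identity
  have hπ := Real.pi_pos
  have hS : 0 < Real.sqrt (4 * π * μ * t) := Real.sqrt_pos.2 (by positivity)
  have hSa : Real.sqrt (4 * π * μ * t) * a = 2 * (Real.sqrt 3 * Real.sqrt π) := by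
    rw [ha_def, haa_def, ← Real.sqrt_mul (by positivity)]
    have h : 4 * π * μ * t * (3 / (μ * t)) = 2 ^ 2 * (3 * π) := by field_simp; ring
    rw [h, Real.sqrt_mul (by norm_num), Real.sqrt_sq (by norm_num),
      Real.sqrt_mul (by norm_num)]
  have hcoef : (1 : ℝ) / (4 * Real.sqrt 3) =
      a⁻¹ * (Real.sqrt π / 2) / Real.sqrt (4 * π * μ * t) := by
    have e1 : a⁻¹ * (Real.sqrt π / 2) / Real.sqrt (4 * π * μ * t) =
        Real.sqrt π / (2 * (Real.sqrt (4 * π * μ * t) * a)) := by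
      rw [div_eq_div_iff hS.ne' (by positivity)]
      field_simp
    rw [e1, hSa, div_eq_div_iff (by positivity) (by positivity)]
    ring
  -- final assembly
  have hrw : Real.exp (b * t - (x + z) ^ 2 / c) =
      Real.exp (b * t) * Real.exp (-((x + z) ^ 2 / c)) := by
    rw [sub_eq_add_neg, Real.exp_add]
  rw [hrw, hcoef]
  have final : Real.exp (b * t) * Real.exp (-((x + z) ^ 2 / c)) *
      (1 / Real.sqrt (4 * π * μ * t) +
        a⁻¹ * (Real.sqrt π / 2) / Real.sqrt (4 * π * μ * t) * erfc a) =
      Real.exp (b * t) / Real.sqrt (4 * π * μ * t) *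
        (Real.exp (-((x + z) ^ 2 / c)) * (1 + a⁻¹ * (Real.sqrt π / 2 * erfc a))) := by
    field_simp
  rw [final]
  exact mul_le_mul_of_nonneg_left hT (by positivity)
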